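/- In the neutral case σ = 1, the distance process preserves positive correlations: if μ is a probability measure on {0,…,ℓ}^m having positive correlations, then for every n ≥ 0 the probability measure μ·(p_H)^n, defined by e ↦ Σ_d μ(d)·(p_H)^n(d,e) where (p_H)^n is the n-th matrix power of the lumped transition matrix, also has positive correlations. -/

import Mathlib

open Finset

set_option linter.unusedSectionVars false
set_option linter.deprecated false
set_option linter.unusedTactic false
set_option maxHeartbeats 1000000

/-- Lumped mutation matrix `M_H(b,c)`. -/
noncomputable def MH (κ ℓ : ℕ) (q : ℝ) (b c : ℕ) : ℝ :=
  ∑ k ∈ range (ℓ - b + 1), ∑ l ∈ range (b + 1),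
    if (k : ℤ) - (l : ℤ) = (c : ℤ) - (b : ℤ) then
      ((ℓ - b).choose k : ℝ) * (b.choose l : ℝ) * q ^ k * (1 - q) ^ (ℓ - b - k) *
        (q / ((κ : ℝ) - 1)) ^ l * (1 - q / ((κ : ℝ) - 1)) ^ (b - l)
    else 0

/-- Neutral lumped transition matrix `p_H` on `{0,…,ℓ}^m` (case `σ = 1`). -/
noncomputable def pHneutral (κ ℓ m : ℕ) (q : ℝ)
    (d e : Fin m → Fin (ℓ + 1)) : ℝ :=
  ∏ i, ∑ k ∈ range (ℓ + 1),
    ((univ.filter fun i' => (d i' : ℕ) = k).card / (m : ℝ)) * MH κ ℓ q k (e i)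

/-- `n`-th matrix power of the neutral lumped transition matrix. -/
noncomputable def pHneutraln (κ ℓ m : ℕ) (q : ℝ) :
    ℕ → (Fin m → Fin (ℓ + 1)) → (Fin m → Fin (ℓ + 1)) → ℝ
  | 0 => fun d e => if d = e then 1 else 0
  | n + 1 => fun d e => ∑ c, pHneutraln κ ℓ m q n d c * pHneutral κ ℓ m q c e

/-- A probability vector `μ` on `{0,…,ℓ}^m` has positive correlations if
`Σ fg dμ ≥ (Σ f dμ)(Σ g dμ)` for all non-decreasing `f, g`. -/
def PosCorr {ℓ m : ℕ} (μ : (Fin m → Fin (ℓ + 1)) → ℝ) : Prop :=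
  ∀ f g : (Fin m → Fin (ℓ + 1)) → ℝ, Monotone f → Monotone g →
    (∑ d, f d * μ d) * (∑ d, g d * μ d) ≤ ∑ d, f d * g d * μ d

/-! ### Generic FKG machinery for finite products of linear orders -/

lemma mul_nonneg_of_nonpos_nonpos' {a b : ℝ} (ha : a ≤ 0) (hb : b ≤ 0) : 0 ≤ a * b := by
  nlinarith

section Generic
variable {X : Type*} [Fintype X] [LinearOrder X]

lemma cheb' (r F G : X → ℝ) (hr : ∀ x, 0 ≤ r x) (hF : Monotone F) (hG : Monotone G) :
    (∑ x, r x * F x) * (∑ x, r x * G x) ≤ (∑ x, r x) * ∑ x, r x * (F x * G x) := by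
  have key : 0 ≤ ∑ x : X, ∑ y : X, r x * r y * ((F x - F y) * (G x - G y)) := by
    refine Finset.sum_nonneg fun x _ => Finset.sum_nonneg fun y _ => ?_
    refine mul_nonneg (mul_nonneg (hr x) (hr y)) ?_
    rcases le_total x y with h | h
    · exact mul_nonneg_of_nonpos_nonpos' (by linarith [hF h]) (by linarith [hG h])
    · exact mul_nonneg (by linarith [hF h]) (by linarith [hG h])
  have e1 : ∀ (A B : X → ℝ), (∑ x, A x) * (∑ x, B x) = ∑ x : X, ∑ y : X, A x * B y :=
    fun A B => Fintype.sum_mul_sum A B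
  have expand : ∑ x : X, ∑ y : X, r x * r y * ((F x - F y) * (G x - G y))
      = 2 * ((∑ x, r x) * (∑ x, r x * (F x * G x)) - (∑ x, r x * F x) * (∑ x, r x * G x)) := by
    have h1 := e1 (fun x => r x) (fun x => r x * (F x * G x))
    have h2 := e1 (fun x => r x * (F x * G x)) (fun x => r x)
    have h3 := e1 (fun x => r x * F x) (fun x => r x * G x)
    have h4 := e1 (fun x => r x * G x) (fun x => r x * F x)
    have hc : (∑ x, r x * (F x * G x)) * (∑ x, r x) = (∑ x, r x) * (∑ x, r x * (F x * G x)) := by ring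
    have hd : (∑ x, r x * G x) * (∑ x, r x * F x) = (∑ x, r x * F x) * (∑ x, r x * G x) := by ring
    rw [hc] at h2; rw [hd] at h4
    calc ∑ x : X, ∑ y : X, r x * r y * ((F x - F y) * (G x - G y))
        = ∑ x : X, ∑ y : X, ((r x * (F x * G x)) * (r y) + (r x) * (r y * (F y * G y))
            - (r x * F x) * (r y * G y) - (r x * G x) * (r y * F y)) := by
          refine Finset.sum_congr rfl fun x _ => Finset.sum_congr rfl fun y _ => ?_; ring
      _ = 2 * ((∑ x, r x) * (∑ x, r x * (F x * G x)) - (∑ x, r x * F x) * (∑ x, r x * G x)) := by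
          simp only [Finset.sum_add_distrib, Finset.sum_sub_distrib, ← h1, ← h2, ← h3, ← h4]
          ring
  rw [expand] at key; linarith

lemma cons_mono' {m : ℕ} {x y : X} {s t : Fin m → X} (hxy : x ≤ y) (hst : s ≤ t) :
    (Fin.cons x s : Fin (m+1) → X) ≤ Fin.cons y t := by
  intro i
  refine Fin.cases ?_ ?_ i
  · simpa using hxy
  · intro j; simpa using hst j

lemma sum_pi_succ' {m : ℕ} (F : (Fin (m+1) → X) → ℝ) :
    ∑ e : Fin (m+1) → X, F e = ∑ x : X, ∑ t : Fin m → X, F (Fin.cons x t) := by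
  rw [Fintype.sum_equiv (Fin.consEquiv (fun _ : Fin (m+1) => X)).symm F (fun p => F (Fin.cons p.1 p.2))
    (fun e => by simp [Fin.consEquiv, Fin.cons_self_tail]), Fintype.sum_prod_type]

lemma prod_pi_nonneg {m : ℕ} (r : Fin m → X → ℝ) (hr : ∀ i x, 0 ≤ r i x) (e : Fin m → X) :
    0 ≤ ∏ i, r i (e i) := Finset.prod_nonneg fun i _ => hr i (e i)

lemma sum_prod_pi : ∀ (m : ℕ) (r : Fin m → X → ℝ),
    ∑ e : Fin m → X, ∏ i, r i (e i) = ∏ i, ∑ x, r i x := by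
  intro m
  induction m with
  | zero => intro r; simp
  | succ m ih =>
    intro r
    rw [sum_pi_succ' (fun e => ∏ i, r i (e i))]
    simp only [Fin.prod_univ_succ, Fin.cons_zero, Fin.cons_succ]
    rw [← ih (fun i x => r i.succ x)]
    rw [← Finset.sum_mul_sum]

lemma prodFKG : ∀ (m : ℕ) (r : Fin m → X → ℝ), (∀ i x, 0 ≤ r i x) →
    ∀ f g : (Fin m → X) → ℝ, Monotone f → Monotone g →
    (∑ e : Fin m → X, f e * ∏ i, r i (e i)) * (∑ e : Fin m → X, g e * ∏ i, r i (e i)) ≤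
      (∑ e : Fin m → X, ∏ i, r i (e i)) * ∑ e : Fin m → X, f e * g e * ∏ i, r i (e i) := by
  intro m
  induction m with
  | zero =>
    intro r hr f g hf hg
    simp
  | succ m ih =>
    intro r hr f g hf hg
    set r' : Fin m → X → ℝ := fun i x => r i.succ x with hr'def
    have hr' : ∀ i x, 0 ≤ r' i x := fun i x => hr i.succ x
    set F : X → ℝ := fun x => ∑ t : Fin m → X, f (Fin.cons x t) * ∏ i, r' i (t i) with hF
    set G : X → ℝ := fun x => ∑ t : Fin m → X, g (Fin.cons x t) * ∏ i, r' i (t i) with hG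
    set H : X → ℝ := fun x => ∑ t : Fin m → X, f (Fin.cons x t) * g (Fin.cons x t) * ∏ i, r' i (t i) with hH
    set W : ℝ := ∑ t : Fin m → X, ∏ i, r' i (t i) with hW
    have hWnn : 0 ≤ W := Finset.sum_nonneg fun t _ => prod_pi_nonneg r' hr' t
    have split : ∀ φ : (Fin (m+1) → X) → ℝ,
        (∑ e : Fin (m+1) → X, φ e * ∏ i, r i (e i))
          = ∑ x : X, r 0 x * (∑ t : Fin m → X, φ (Fin.cons x t) * ∏ i, r' i (t i)) := by
      intro φ
      rw [sum_pi_succ' (fun e => φ e * ∏ i, r i (e i))]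
      refine Finset.sum_congr rfl fun x _ => ?_
      rw [Finset.mul_sum]
      refine Finset.sum_congr rfl fun t _ => ?_
      simp only [Fin.prod_univ_succ, Fin.cons_zero, Fin.cons_succ, hr'def]
      ring
    have splitW : (∑ e : Fin (m+1) → X, ∏ i, r i (e i)) = ∑ x : X, r 0 x * W := by
      have := split (fun _ => 1)
      simpa using this
    rw [split f, split g, splitW, split (fun e => f e * g e)]
    have hFmono : Monotone F := by
      intro x y hxy
      refine Finset.sum_le_sum fun t _ => ?_
      exact mul_le_mul_of_nonneg_right (hf (cons_mono' hxy le_rfl)) (prod_pi_nonneg r' hr' t)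
    have hGmono : Monotone G := by
      intro x y hxy
      refine Finset.sum_le_sum fun t _ => ?_
      exact mul_le_mul_of_nonneg_right (hg (cons_mono' hxy le_rfl)) (prod_pi_nonneg r' hr' t)
    have key : ∀ x, F x * G x ≤ W * H x := by
      intro x
      exact ih r' hr' (fun t => f (Fin.cons x t)) (fun t => g (Fin.cons x t))
        (fun s t hst => hf (cons_mono' le_rfl hst)) (fun s t hst => hg (cons_mono' le_rfl hst))
    calc (∑ x, r 0 x * F x) * (∑ x, r 0 x * G x)
        ≤ (∑ x, r 0 x) * ∑ x, r 0 x * (F x * G x) := cheb' _ _ _ (fun x => hr 0 x) hFmono hGmono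
      _ ≤ (∑ x, r 0 x) * ∑ x, r 0 x * (W * H x) := by
          refine mul_le_mul_of_nonneg_left (Finset.sum_le_sum fun x _ => ?_)
            (Finset.sum_nonneg fun x _ => hr 0 x)
          exact mul_le_mul_of_nonneg_left (key x) (hr 0 x)
      _ = (∑ x, r 0 x * W) * ∑ x, r 0 x * H x := by
          rw [Finset.sum_mul_sum, Finset.sum_mul_sum]
          refine Finset.sum_congr rfl fun x _ => Finset.sum_congr rfl fun y _ => ?_
          ring

lemma prodDom : ∀ (m : ℕ) (r r' : Fin m → X → ℝ), (∀ i x, 0 ≤ r i x) → (∀ i x, 0 ≤ r' i x) →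
    (∀ i (h : X → ℝ), Monotone h → ∑ x, r i x * h x ≤ ∑ x, r' i x * h x) →
    ∀ f : (Fin m → X) → ℝ, Monotone f →
    (∑ e : Fin m → X, f e * ∏ i, r i (e i)) ≤ ∑ e : Fin m → X, f e * ∏ i, r' i (e i) := by
  intro m
  induction m with
  | zero => intro r r' _ _ _ f _; simp
  | succ m ih =>
    intro r r' hr hr' hdom f hf
    set rt : Fin m → X → ℝ := fun i x => r i.succ x with hrt
    set rt' : Fin m → X → ℝ := fun i x => r' i.succ x with hrt'
    have split : ∀ (ρ : Fin (m+1) → X → ℝ) (ρt : Fin m → X → ℝ), (∀ i x, ρt i x = ρ i.succ x) →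
        (∑ e : Fin (m+1) → X, f e * ∏ i, ρ i (e i))
          = ∑ x : X, ρ 0 x * (∑ t : Fin m → X, f (Fin.cons x t) * ∏ i, ρt i (t i)) := by
      intro ρ ρt hρt
      rw [sum_pi_succ' (fun e => f e * ∏ i, ρ i (e i))]
      refine Finset.sum_congr rfl fun x _ => ?_
      rw [Finset.mul_sum]
      refine Finset.sum_congr rfl fun t _ => ?_
      simp only [Fin.prod_univ_succ, Fin.cons_zero, Fin.cons_succ, hρt]
      ring
    rw [split r rt (fun _ _ => rfl), split r' rt' (fun _ _ => rfl)]
    set F : X → ℝ := fun x => ∑ t : Fin m → X, f (Fin.cons x t) * ∏ i, rt i (t i) with hF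
    set F' : X → ℝ := fun x => ∑ t : Fin m → X, f (Fin.cons x t) * ∏ i, rt' i (t i) with hF'
    have hFF' : ∀ x, F x ≤ F' x := fun x =>
      ih rt rt' (fun i x => hr i.succ x) (fun i x => hr' i.succ x)
        (fun i h hh => hdom i.succ h hh) _ (fun s t hst => hf (cons_mono' le_rfl hst))
    have hF'mono : Monotone F' := by
      intro x y hxy
      refine Finset.sum_le_sum fun t _ => ?_
      exact mul_le_mul_of_nonneg_right (hf (cons_mono' hxy le_rfl))
        (prod_pi_nonneg rt' (fun i x => hr' i.succ x) t)
    calc ∑ x, r 0 x * F x ≤ ∑ x, r 0 x * F' x :=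
          Finset.sum_le_sum fun x _ => mul_le_mul_of_nonneg_left (hFF' x) (hr 0 x)
      _ ≤ ∑ x, r' 0 x * F' x := hdom 0 F' hF'mono

end Generic

/-! ### Binomial weights -/

noncomputable def BinW (p : ℝ) (n k : ℕ) : ℝ := (n.choose k : ℝ) * p ^ k * (1 - p) ^ (n - k)

lemma BinW_nonneg {p : ℝ} (hp0 : 0 ≤ p) (hp1 : p ≤ 1) (n k : ℕ) : 0 ≤ BinW p n k := by
  unfold BinW
  have : (0:ℝ) ≤ 1 - p := by linarith
  positivity

lemma BinW_sum (p : ℝ) (n : ℕ) : ∑ k ∈ range (n+1), BinW p n k = 1 := by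
  calc ∑ k ∈ range (n+1), BinW p n k
      = ∑ k ∈ range (n+1), p^k * (1-p)^(n-k) * (n.choose k : ℝ) :=
        Finset.sum_congr rfl fun k _ => by unfold BinW; ring
    _ = (p + (1-p))^n := (add_pow p (1-p) n).symm
    _ = 1 := by norm_num

lemma binStep (p : ℝ) (n : ℕ) (φ : ℕ → ℝ) :
    ∑ k ∈ range (n+2), BinW p (n+1) k * φ k
      = ∑ k ∈ range (n+1), BinW p n k * ((1-p) * φ k + p * φ (k+1)) := by
  have pascal : ∀ j, BinW p (n+1) (j+1) = p * BinW p n j + (Nat.choose n (j+1) : ℝ) * p ^ (j+1) * (1-p) ^ (n - j) := by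
    intro j
    unfold BinW
    rw [Nat.choose_succ_succ]
    push_cast
    simp only [Nat.succ_eq_add_one, show n + 1 - (j+1) = n - j from by omega]
    ring
  have peel : ∑ k ∈ range (n+2), BinW p (n+1) k * φ k
      = BinW p (n+1) 0 * φ 0 + ∑ j ∈ range (n+1), BinW p (n+1) (j+1) * φ (j+1) := by
    rw [Finset.sum_range_succ' (fun k => BinW p (n+1) k * φ k) (n+1)]; ring
  have rhs : ∑ k ∈ range (n+1), BinW p n k * ((1-p) * φ k + p * φ (k+1))
      = (∑ k ∈ range (n+1), BinW p n k * (1-p) * φ k) + ∑ k ∈ range (n+1), p * BinW p n k * φ (k+1) := by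
    rw [← Finset.sum_add_distrib]
    exact Finset.sum_congr rfl fun k _ => by ring
  have e1 : ∑ j ∈ range (n+1), BinW p (n+1) (j+1) * φ (j+1)
      = (∑ j ∈ range (n+1), p * BinW p n j * φ (j+1))
        + ∑ j ∈ range (n+1), (n.choose (j+1):ℝ) * p^(j+1) * (1-p)^(n-j) * φ (j+1) := by
    rw [← Finset.sum_add_distrib]
    exact Finset.sum_congr rfl fun j _ => by rw [pascal j]; ring
  have e2 : ∑ k ∈ range (n+1), BinW p n k * (1-p) * φ k
      = (∑ j ∈ range n, BinW p n (j+1) * (1-p) * φ (j+1)) + BinW p (n+1) 0 * φ 0 := by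
    rw [Finset.sum_range_succ' (fun k => BinW p n k * (1-p) * φ k) n]
    congr 1
    unfold BinW
    simp only [Nat.choose_zero_right, pow_zero, Nat.sub_zero]
    ring
  have e3 : ∑ j ∈ range (n+1), (n.choose (j+1):ℝ) * p^(j+1) * (1-p)^(n-j) * φ (j+1)
      = ∑ j ∈ range n, BinW p n (j+1) * (1-p) * φ (j+1) := by
    rw [Finset.sum_range_succ]
    simp only [Nat.choose_succ_self, Nat.cast_zero, zero_mul]
    rw [add_zero]
    refine Finset.sum_congr rfl fun j hj => ?_
    have hjn : j < n := Finset.mem_range.mp hj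
    unfold BinW
    rw [show n - j = (n - (j+1)) + 1 from by omega]
    ring
  rw [peel, rhs, e1, e2, e3]
  ring

/-! ### Properties of the lumped mutation matrix -/

section MHfacts
variable (κ ℓ : ℕ) (q : ℝ)

lemma MH_eq (b c : ℕ) : MH κ ℓ q b c =
    ∑ k ∈ range (ℓ - b + 1), ∑ l ∈ range (b + 1),
      if (k : ℤ) - (l : ℤ) = (c : ℤ) - (b : ℤ) then
        BinW q (ℓ-b) k * BinW (q/((κ:ℝ)-1)) b l else 0 := by
  unfold MH BinW
  refine Finset.sum_congr rfl fun k _ => Finset.sum_congr rfl fun l _ => ?_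
  split <;> ring

lemma MH_nonneg (hq0 : 0 ≤ q) (hq1 : q ≤ 1) (hq'0 : 0 ≤ q/((κ:ℝ)-1)) (hq'1 : q/((κ:ℝ)-1) ≤ 1)
    (b c : ℕ) : 0 ≤ MH κ ℓ q b c := by
  rw [MH_eq]
  refine Finset.sum_nonneg fun k _ => Finset.sum_nonneg fun l _ => ?_
  split
  · exact mul_nonneg (BinW_nonneg hq0 hq1 _ _) (BinW_nonneg hq'0 hq'1 _ _)
  · exact le_rfl

lemma MH_exp (b : ℕ) (hb : b ≤ ℓ) (h : ℕ → ℝ) :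
    ∑ c ∈ range (ℓ+1), MH κ ℓ q b c * h c
      = ∑ k ∈ range (ℓ - b + 1), ∑ l ∈ range (b + 1),
          BinW q (ℓ-b) k * BinW (q/((κ:ℝ)-1)) b l * h (b + k - l) := by
  simp_rw [MH_eq, Finset.sum_mul, ite_mul, zero_mul]
  rw [Finset.sum_comm]
  refine Finset.sum_congr rfl fun k hk => ?_
  rw [Finset.sum_comm]
  refine Finset.sum_congr rfl fun l hl => ?_
  have hk' : k ≤ ℓ - b := by have := Finset.mem_range.mp hk; omega
  have hl' : l ≤ b := by have := Finset.mem_range.mp hl; omega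
  rw [Finset.sum_eq_single_of_mem (b + k - l) (Finset.mem_range.mpr (by omega))]
  · rw [if_pos (by omega)]
  · intro c _ hc
    rw [if_neg]
    intro hcond
    exact hc (by omega)

lemma MH_sum (b : ℕ) (hb : b ≤ ℓ) : ∑ c ∈ range (ℓ+1), MH κ ℓ q b c = 1 := by
  have h := MH_exp κ ℓ q b hb (fun _ => 1)
  simp only [mul_one] at h
  rw [h]
  have h2 : ∀ k ∈ range (ℓ - b + 1), ∑ l ∈ range (b+1), BinW q (ℓ-b) k * BinW (q/((κ:ℝ)-1)) b l
      = BinW q (ℓ-b) k := by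
    intro k _
    rw [← Finset.mul_sum, BinW_sum, mul_one]
  rw [Finset.sum_congr rfl h2, BinW_sum]

lemma MH_exp_step (hq0 : 0 ≤ q) (hq'0 : 0 ≤ q/((κ:ℝ)-1)) (hqq' : q + q/((κ:ℝ)-1) ≤ 1)
    (b : ℕ) (hb : b + 1 ≤ ℓ) (h : ℕ → ℝ) (hh : Monotone h) :
    ∑ c ∈ range (ℓ+1), MH κ ℓ q b c * h c ≤ ∑ c ∈ range (ℓ+1), MH κ ℓ q (b+1) c * h c := by
  set q' := q/((κ:ℝ)-1) with hq'
  have hq1 : q ≤ 1 := by linarith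
  have hq'1 : q' ≤ 1 := by linarith
  obtain ⟨n, hn⟩ : ∃ n, ℓ - b = n + 1 := ⟨ℓ - b - 1, by omega⟩
  have hn' : ℓ - (b+1) = n := by omega
  rw [MH_exp κ ℓ q b (by omega) h, MH_exp κ ℓ q (b+1) (by omega) h, hn, hn']
  have lhs_eq : ∑ k ∈ range (n+1+1), ∑ l ∈ range (b + 1), BinW q (n+1) k * BinW q' b l * h (b + k - l)
      = ∑ k ∈ range (n+1), BinW q n k * ((1-q) * (∑ l ∈ range (b+1), BinW q' b l * h (b + k - l))
          + q * (∑ l ∈ range (b+1), BinW q' b l * h (b + (k+1) - l))) := by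
    rw [← binStep q n (fun k => ∑ l ∈ range (b+1), BinW q' b l * h (b + k - l))]
    refine Finset.sum_congr rfl fun k _ => ?_
    rw [Finset.mul_sum]
    exact Finset.sum_congr rfl fun l _ => by ring
  have rhs_eq : ∑ k ∈ range (n+1), ∑ l ∈ range (b + 1 + 1), BinW q n k * BinW q' (b+1) l * h (b + 1 + k - l)
      = ∑ k ∈ range (n+1), BinW q n k * (∑ l ∈ range (b+1), BinW q' b l *
          ((1-q') * h (b + 1 + k - l) + q' * h (b + k - l))) := by
    refine Finset.sum_congr rfl fun k _ => ?_
    have h3 : ∑ l ∈ range (b + 1 + 1), BinW q n k * BinW q' (b+1) l * h (b + 1 + k - l)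
        = BinW q n k * ∑ l ∈ range (b+2), BinW q' (b+1) l * h (b + 1 + k - l) := by
      rw [Finset.mul_sum]; exact Finset.sum_congr rfl fun l _ => by ring
    rw [h3, binStep q' b (fun l => h (b + 1 + k - l))]
    congr 1
    refine Finset.sum_congr rfl fun l _ => ?_
    have harg : b + 1 + k - (l + 1) = b + k - l := by omega
    rw [harg]
  rw [lhs_eq, rhs_eq]
  refine Finset.sum_le_sum fun k hk => ?_
  refine mul_le_mul_of_nonneg_left ?_ (BinW_nonneg hq0 hq1 n k)
  have expand : ∑ l ∈ range (b+1), BinW q' b l * ((1-q') * h (b + 1 + k - l) + q' * h (b + k - l))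
      - ((1-q) * (∑ l ∈ range (b+1), BinW q' b l * h (b + k - l))
          + q * (∑ l ∈ range (b+1), BinW q' b l * h (b + (k+1) - l)))
      = ∑ l ∈ range (b+1), BinW q' b l * ((1 - q - q') * (h (b + 1 + k - l) - h (b + k - l))) := by
    rw [Finset.mul_sum, Finset.mul_sum, ← Finset.sum_add_distrib, ← Finset.sum_sub_distrib]
    refine Finset.sum_congr rfl fun l hl => ?_
    have harg : b + (k+1) - l = b + 1 + k - l := by omega
    rw [harg]
    ring
  have nonneg : 0 ≤ ∑ l ∈ range (b+1), BinW q' b l * ((1 - q - q') * (h (b + 1 + k - l) - h (b + k - l))) := by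
    refine Finset.sum_nonneg fun l hl => ?_
    refine mul_nonneg (BinW_nonneg hq'0 hq'1 b l) (mul_nonneg (by linarith) ?_)
    have harg : b + k - l ≤ b + 1 + k - l := by omega
    linarith [hh harg]
  linarith [expand ▸ nonneg]

lemma MH_mono (hq0 : 0 ≤ q) (hq'0 : 0 ≤ q/((κ:ℝ)-1)) (hqq' : q + q/((κ:ℝ)-1) ≤ 1)
    (b b' : ℕ) (hbb' : b ≤ b') (hb' : b' ≤ ℓ) (h : ℕ → ℝ) (hh : Monotone h) :
    ∑ c ∈ range (ℓ+1), MH κ ℓ q b c * h c ≤ ∑ c ∈ range (ℓ+1), MH κ ℓ q b' c * h c := by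
  induction b', hbb' using Nat.le_induction with
  | base => exact le_rfl
  | succ b'' hb'' ih =>
    exact (ih (by omega)).trans (MH_exp_step κ ℓ q hq0 hq'0 hqq' b'' hb' h hh)

end MHfacts
/-- Extend a function on `Fin (ℓ+1)` to `ℕ`. -/
noncomputable def extFin (ℓ : ℕ) (h₀ : Fin (ℓ+1) → ℝ) : ℕ → ℝ := fun c => h₀ ⟨min c ℓ, by omega⟩

lemma extFin_mono (ℓ : ℕ) (h₀ : Fin (ℓ+1) → ℝ) (hh : Monotone h₀) : Monotone (extFin ℓ h₀) := by
  intro a b hab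
  refine hh ?_
  simp only [Fin.mk_le_mk]
  omega

lemma extFin_coe (ℓ : ℕ) (h₀ : Fin (ℓ+1) → ℝ) (x : Fin (ℓ+1)) : extFin ℓ h₀ (x : ℕ) = h₀ x := by
  unfold extFin
  have := x.isLt
  exact congrArg h₀ (Fin.ext (Nat.min_eq_left (by omega)))

lemma sum_univ_eq_range (ℓ : ℕ) (w : ℕ → ℝ) :
    ∑ x : Fin (ℓ+1), w (x : ℕ) = ∑ c ∈ range (ℓ+1), w c :=
  Fin.sum_univ_eq_sum_range w (ℓ+1)

section Assembly
variable (κ ℓ m : ℕ) (q : ℝ)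

/-- Single-site law used in `pHneutral`. -/
noncomputable def sdc (d : Fin m → Fin (ℓ+1)) (c : ℕ) : ℝ :=
  ∑ k ∈ range (ℓ + 1), ((univ.filter fun i' => (d i' : ℕ) = k).card / (m : ℝ)) * MH κ ℓ q k c

lemma pH_eq (d e : Fin m → Fin (ℓ+1)) :
    pHneutral κ ℓ m q d e = ∏ i, sdc κ ℓ m q d (e i) := rfl

lemma sdc_eq (d : Fin m → Fin (ℓ+1)) (c : ℕ) :
    sdc κ ℓ m q d c = (∑ i, MH κ ℓ q (d i) c) / m := by
  unfold sdc
  have key : ∑ k ∈ range (ℓ + 1), ((univ.filter fun i' => ((d i' : ℕ) = k)).card : ℝ) * MH κ ℓ q k c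
      = ∑ i, MH κ ℓ q (d i) c := by
    have h1 : ∀ k, ((univ.filter fun i' => ((d i' : ℕ) = k)).card : ℝ) * MH κ ℓ q k c
        = ∑ i : Fin m, if ((d i : ℕ) = k) then MH κ ℓ q (d i) c else 0 := by
      intro k
      rw [Finset.card_filter]
      push_cast
      rw [Finset.sum_mul]
      refine Finset.sum_congr rfl fun i _ => ?_
      by_cases h : (d i : ℕ) = k
      · simp [h]
      · simp [h]
    rw [Finset.sum_congr rfl fun k _ => h1 k, Finset.sum_comm]
    refine Finset.sum_congr rfl fun i _ => ?_
    rw [Finset.sum_ite_eq (range (ℓ+1)) ((d i : ℕ)) (fun _ => MH κ ℓ q (d i) c)]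
    exact if_pos (Finset.mem_range.mpr (d i).isLt)
  rw [← key, Finset.sum_div]
  exact Finset.sum_congr rfl fun k _ => by ring

variable (hκ : 2 ≤ κ) (hm : 1 ≤ m) (hq0 : 0 ≤ q) (hq'0 : 0 ≤ q/((κ:ℝ)-1))
  (hqq' : q + q/((κ:ℝ)-1) ≤ 1)

include hq0 hq'0 hqq' in
lemma sdc_nonneg (d : Fin m → Fin (ℓ+1)) (c : ℕ) : 0 ≤ sdc κ ℓ m q d c := by
  unfold sdc
  refine Finset.sum_nonneg fun k _ => mul_nonneg (by positivity)
    (MH_nonneg κ ℓ q hq0 (by linarith) hq'0 (by linarith) k c)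

include hm in
lemma sdc_sum (d : Fin m → Fin (ℓ+1)) :
    ∑ c ∈ range (ℓ+1), sdc κ ℓ m q d c = 1 := by
  simp_rw [sdc_eq]
  rw [← Finset.sum_div, Finset.sum_comm]
  have h1 : ∀ i : Fin m, ∑ c ∈ range (ℓ+1), MH κ ℓ q ((d i : ℕ)) c = 1 := fun i =>
    MH_sum κ ℓ q _ (by have := (d i).isLt; omega)
  rw [Finset.sum_congr rfl fun i _ => h1 i]
  have hm' : (m:ℝ) ≠ 0 := by
    have : 0 < m := hm
    exact_mod_cast this.ne'
  rw [Finset.sum_const, Finset.card_univ, Fintype.card_fin]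
  simp [hm']

include hm hq0 hq'0 hqq' in
lemma sdc_dom (d d' : Fin m → Fin (ℓ+1)) (hdd' : d ≤ d') (h : ℕ → ℝ) (hh : Monotone h) :
    ∑ c ∈ range (ℓ+1), sdc κ ℓ m q d c * h c ≤ ∑ c ∈ range (ℓ+1), sdc κ ℓ m q d' c * h c := by
  simp_rw [sdc_eq, div_mul_eq_mul_div, ← Finset.sum_div]
  have hm0 : (0:ℝ) < m := by exact_mod_cast Nat.lt_of_lt_of_le Nat.zero_lt_one hm
  rw [div_le_div_iff_of_pos_right hm0]
  simp_rw [Finset.sum_mul]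
  rw [Finset.sum_comm, Finset.sum_comm (s := range (ℓ+1))]
  refine Finset.sum_le_sum fun i _ => ?_
  refine MH_mono κ ℓ q hq0 hq'0 hqq' (d i) (d' i) ?_ ?_ h hh
  · exact hdd' i
  · have := (d' i).isLt; omega

include hm hq0 hq'0 hqq' in
lemma sdc_dom_fin (d d' : Fin m → Fin (ℓ+1)) (hdd' : d ≤ d') (h₀ : Fin (ℓ+1) → ℝ)
    (hh : Monotone h₀) :
    ∑ x : Fin (ℓ+1), sdc κ ℓ m q d (x : ℕ) * h₀ x
      ≤ ∑ x : Fin (ℓ+1), sdc κ ℓ m q d' (x : ℕ) * h₀ x := by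
  have e : ∀ dd : Fin m → Fin (ℓ+1), ∑ x : Fin (ℓ+1), sdc κ ℓ m q dd (x:ℕ) * h₀ x
      = ∑ c ∈ range (ℓ+1), sdc κ ℓ m q dd c * extFin ℓ h₀ c := by
    intro dd
    rw [← sum_univ_eq_range ℓ (fun c => sdc κ ℓ m q dd c * extFin ℓ h₀ c)]
    exact Finset.sum_congr rfl fun x _ => by rw [extFin_coe]
  rw [e d, e d']
  exact sdc_dom κ ℓ m q hm hq0 hq'0 hqq' d d' hdd' (extFin ℓ h₀) (extFin_mono ℓ h₀ hh)

include hm in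
lemma sdc_sum_fin (d : Fin m → Fin (ℓ+1)) :
    ∑ x : Fin (ℓ+1), sdc κ ℓ m q d (x : ℕ) = 1 := by
  rw [sum_univ_eq_range ℓ (fun c => sdc κ ℓ m q d c)]
  exact sdc_sum κ ℓ m q hm d

include hm hq0 hq'0 hqq' in
lemma step_lemma (μ : (Fin m → Fin (ℓ+1)) → ℝ) (hμ0 : ∀ d, 0 ≤ μ d) (hμ1 : ∑ d, μ d = 1)
    (hpos : PosCorr μ) :
    (∀ e, 0 ≤ ∑ d, μ d * pHneutral κ ℓ m q d e) ∧
    ((∑ e, ∑ d, μ d * pHneutral κ ℓ m q d e) = 1) ∧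
    PosCorr (fun e => ∑ d, μ d * pHneutral κ ℓ m q d e) := by
  have pH_nn : ∀ d e, 0 ≤ pHneutral κ ℓ m q d e := fun d e => by
    rw [pH_eq]
    exact Finset.prod_nonneg fun i _ => sdc_nonneg κ ℓ m q hq0 hq'0 hqq' d ((e i : ℕ))
  have pH_sum : ∀ d, ∑ e, pHneutral κ ℓ m q d e = 1 := by
    intro d
    have h1 : ∑ e : Fin m → Fin (ℓ+1), pHneutral κ ℓ m q d e
        = ∑ e : Fin m → Fin (ℓ+1),
            ∏ i, (fun (_ : Fin m) (x : Fin (ℓ+1)) => sdc κ ℓ m q d (x:ℕ)) i (e i) := rfl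
    rw [h1, sum_prod_pi m (fun (_ : Fin m) (x : Fin (ℓ+1)) => sdc κ ℓ m q d (x:ℕ))]
    rw [Finset.prod_congr rfl fun i _ => sdc_sum_fin κ ℓ m q hm d]
    simp
  have swap : ∀ F : (Fin m → Fin (ℓ+1)) → ℝ,
      ∑ e, F e * (∑ d, μ d * pHneutral κ ℓ m q d e)
        = ∑ d, (∑ e, F e * pHneutral κ ℓ m q d e) * μ d := by
    intro F
    simp_rw [Finset.mul_sum, Finset.sum_mul]
    rw [Finset.sum_comm]
    refine Finset.sum_congr rfl fun d _ => Finset.sum_congr rfl fun e _ => by ring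
  refine ⟨fun e => Finset.sum_nonneg fun d _ => mul_nonneg (hμ0 d) (pH_nn d e), ?_, ?_⟩
  · have h := swap (fun _ => 1)
    simp only [one_mul] at h
    rw [h]
    rw [Finset.sum_congr rfl fun d _ => by rw [pH_sum d, one_mul]]
    exact hμ1
  · intro f g hf hg
    set Φf : (Fin m → Fin (ℓ+1)) → ℝ := fun d => ∑ e, f e * pHneutral κ ℓ m q d e with hΦf
    set Φg : (Fin m → Fin (ℓ+1)) → ℝ := fun d => ∑ e, g e * pHneutral κ ℓ m q d e with hΦg
    set Φfg : (Fin m → Fin (ℓ+1)) → ℝ :=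
      fun d => ∑ e, f e * g e * pHneutral κ ℓ m q d e with hΦfg
    have phi_eq : ∀ (F : (Fin m → Fin (ℓ+1)) → ℝ) (d : Fin m → Fin (ℓ+1)),
        ∑ e, F e * pHneutral κ ℓ m q d e
          = ∑ e : Fin m → Fin (ℓ+1),
              F e * ∏ i, (fun (_ : Fin m) (x : Fin (ℓ+1)) => sdc κ ℓ m q d (x:ℕ)) i (e i) := by
      intro F d; rfl
    have hΦf_mono : Monotone Φf := by
      intro d d' hdd'
      rw [hΦf]
      simp only
      rw [phi_eq f d, phi_eq f d']
      exact prodDom m _ _ (fun i x => sdc_nonneg κ ℓ m q hq0 hq'0 hqq' d _)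
        (fun i x => sdc_nonneg κ ℓ m q hq0 hq'0 hqq' d' _)
        (fun i h hh => sdc_dom_fin κ ℓ m q hm hq0 hq'0 hqq' d d' hdd' h hh) f hf
    have hΦg_mono : Monotone Φg := by
      intro d d' hdd'
      rw [hΦg]
      simp only
      rw [phi_eq g d, phi_eq g d']
      exact prodDom m _ _ (fun i x => sdc_nonneg κ ℓ m q hq0 hq'0 hqq' d _)
        (fun i x => sdc_nonneg κ ℓ m q hq0 hq'0 hqq' d' _)
        (fun i h hh => sdc_dom_fin κ ℓ m q hm hq0 hq'0 hqq' d d' hdd' h hh) g hg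
    have fkg : ∀ d, Φf d * Φg d ≤ Φfg d := by
      intro d
      have h0 := prodFKG m (fun (_ : Fin m) (x : Fin (ℓ+1)) => sdc κ ℓ m q d (x:ℕ))
        (fun i x => sdc_nonneg κ ℓ m q hq0 hq'0 hqq' d _) f g hf hg
      have hmass : ∑ e : Fin m → Fin (ℓ+1),
          ∏ i, (fun (_ : Fin m) (x : Fin (ℓ+1)) => sdc κ ℓ m q d (x:ℕ)) i (e i) = 1 := by
        have h4 := phi_eq (fun _ => 1) d
        simp only [one_mul] at h4
        rw [← h4]
        exact pH_sum d
      rw [hmass, one_mul] at h0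
      rw [hΦf, hΦg, hΦfg]
      simp only
      rw [phi_eq f d, phi_eq g d, phi_eq (fun e => f e * g e) d]
      exact h0
    rw [swap f, swap g, swap (fun e => f e * g e)]
    calc (∑ d, Φf d * μ d) * (∑ d, Φg d * μ d)
        ≤ ∑ d, Φf d * Φg d * μ d := hpos Φf Φg hΦf_mono hΦg_mono
      _ ≤ ∑ d, (∑ e, (fun e => f e * g e) e * pHneutral κ ℓ m q d e) * μ d := by
          refine Finset.sum_le_sum fun d _ => ?_
          exact mul_le_mul_of_nonneg_right (fkg d) (hμ0 d)

end Assembly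

/-! ### Main theorem -/

/-- In the neutral case `σ = 1`, the distance process preserves positive
correlations: if the initial law has positive correlations, so does the law at any
time `n`. -/
theorem neutral_distance_preserves_posCorr (κ ℓ m : ℕ)
    (hκ : 2 ≤ κ) (hℓ : 1 ≤ ℓ) (hm : 1 ≤ m)
    (q : ℝ) (hq0 : 0 < q) (hq1 : q < 1 - 1 / κ)
    (μ : (Fin m → Fin (ℓ + 1)) → ℝ) (hμ0 : ∀ d, 0 ≤ μ d) (hμ1 : ∑ d, μ d = 1)
    (hpos : PosCorr μ) :
    ∀ n : ℕ, PosCorr (fun e => ∑ d, μ d * pHneutraln κ ℓ m q n d e) := by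
  have hκ2 : (2:ℝ) ≤ (κ:ℝ) := by exact_mod_cast hκ
  have hκ1 : (0:ℝ) < (κ:ℝ) - 1 := by linarith
  have hκpos : (0:ℝ) < (κ:ℝ) := by linarith
  have hq0' : 0 ≤ q := hq0.le
  have hq'0 : 0 ≤ q/((κ:ℝ)-1) := div_nonneg hq0' hκ1.le
  have hqq' : q + q/((κ:ℝ)-1) ≤ 1 := by
    have hmul := mul_lt_mul_of_pos_right hq1 hκpos
    have hfe : (1 - 1/(κ:ℝ)) * κ = κ - 1 := by field_simp
    have h2 : q * κ < κ - 1 := by rw [hfe] at hmul; exact hmul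
    have h3 : q/((κ:ℝ)-1) ≤ 1 - q := by
      rw [div_le_iff₀ hκ1]; nlinarith
    linarith
  have main : ∀ n : ℕ,
      (∀ e, 0 ≤ ∑ d, μ d * pHneutraln κ ℓ m q n d e) ∧
      ((∑ e, ∑ d, μ d * pHneutraln κ ℓ m q n d e) = 1) ∧
      PosCorr (fun e => ∑ d, μ d * pHneutraln κ ℓ m q n d e) := by
    intro n
    induction n with
    | zero =>
      have h0 : ∀ e, ∑ d, μ d * pHneutraln κ ℓ m q 0 d e = μ e := by
        intro e
        show ∑ d, μ d * (if d = e then 1 else 0) = μ e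
        simp [mul_ite, Finset.sum_ite_eq']
      refine ⟨fun e => by rw [h0 e]; exact hμ0 e, ?_, ?_⟩
      · rw [Finset.sum_congr rfl fun e _ => h0 e]; exact hμ1
      · have hfun : (fun e => ∑ d, μ d * pHneutraln κ ℓ m q 0 d e) = μ := funext h0
        rw [hfun]; exact hpos
    | succ n ih =>
      obtain ⟨ih0, ih1, ihpos⟩ := ih
      have hswap : ∀ e, ∑ d, μ d * pHneutraln κ ℓ m q (n+1) d e
          = ∑ c, (∑ d, μ d * pHneutraln κ ℓ m q n d c) * pHneutral κ ℓ m q c e := by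
        intro e
        show ∑ d, μ d * (∑ c, pHneutraln κ ℓ m q n d c * pHneutral κ ℓ m q c e) = _
        simp_rw [Finset.mul_sum, Finset.sum_mul]
        rw [Finset.sum_comm]
        exact Finset.sum_congr rfl fun c _ => Finset.sum_congr rfl fun d _ => by ring
      have hstep := step_lemma κ ℓ m q hm hq0' hq'0 hqq'
        (fun c => ∑ d, μ d * pHneutraln κ ℓ m q n d c) ih0 ih1 ihpos
      refine ⟨fun e => by rw [hswap e]; exact hstep.1 e, ?_, ?_⟩
      · rw [Finset.sum_congr rfl fun e _ => hswap e]; exact hstep.2.1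
      · have hfun : (fun e => ∑ d, μ d * pHneutraln κ ℓ m q (n+1) d e)
            = (fun e => ∑ c, (∑ d, μ d * pHneutraln κ ℓ m q n d c) * pHneutral κ ℓ m q c e) :=
          funext hswap
        rw [hfun]; exact hstep.2.2
  exact fun n => (main n).2.2
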